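/- For nonnegative integers q and n, ζ*({1}^q, n+2) = Σ_{r=1}^{q+1} Σ_{|α|=q+1, length r} ζ(α_1,...,α_{r-1}, α_r + n+1), where the inner sum is over compositions (α_1,...,α_r) of q+1 into r positive parts. -/

import Mathlib

open scoped BigOperators ENNReal NNReal

/-- Multiple zeta value ζ(α 0, ..., α (r-1)). -/
noncomputable def mzv {r : ℕ} (α : Fin r → ℕ) : ℝ :=
  ∑' f : {f : Fin r → ℕ // StrictMono f ∧ ∀ i, 0 < f i},
    ∏ i, ((f.1 i : ℝ) ^ (α i))⁻¹

/-- Multiple zeta-star value ζ*(α 0, ..., α (r-1)). -/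
noncomputable def mzs {r : ℕ} (α : Fin r → ℕ) : ℝ :=
  ∑' f : {f : Fin r → ℕ // Monotone f ∧ ∀ i, 0 < f i},
    ∏ i, ((f.1 i : ℝ) ^ (α i))⁻¹

/-- Riemann zeta value ζ(s) for integer s. -/
noncomputable def rz (s : ℕ) : ℝ := ∑' k : ℕ+, ((k : ℝ) ^ s)⁻¹

/-- The Euler sum G_{n+2}(p,q);  `G n p q` corresponds to G_{n+2}(p,q). -/
noncomputable def G (n p q : ℕ) : ℝ :=
  ∑' x : {fg : (Fin (p + 1) → ℕ) × (Fin q → ℕ) //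
      StrictMono fg.1 ∧ (∀ i, 0 < fg.1 i) ∧ Monotone fg.2 ∧
      (∀ j, 0 < fg.2 j) ∧ ∀ j, fg.2 j ≤ fg.1 (Fin.last p)},
    ((∏ i : Fin p, ((x.1.1 i.castSucc : ℝ))⁻¹) *
      ((x.1.1 (Fin.last p) : ℝ) ^ (n + 2))⁻¹) *
      ∏ j : Fin q, ((x.1.2 j : ℝ))⁻¹

/-- {1}^m : m repetitions of 1. -/
def ones (m : ℕ) : Fin m → ℕ := fun _ => 1
/-- {2}^m : m repetitions of 2. -/
def twos (m : ℕ) : Fin m → ℕ := fun _ => 2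
/-- the exponent string ({2}^a, 3, {2}^b). -/
def z23 (a b : ℕ) : Fin (a + 1 + b) → ℕ :=
  Fin.append (Fin.append (twos a) ![3]) (twos b)


noncomputable def Wt {r : ℕ} (α : Fin r → ℕ) (g : Fin r → ℕ) : ℝ≥0∞ :=
  ∏ i, ((g i : ℝ≥0∞)⁻¹) ^ (α i)

noncomputable def ZV {r : ℕ} (α : Fin r → ℕ) : ℝ≥0∞ :=
  ∑' g : {g : Fin r → ℕ // StrictMono g ∧ ∀ i, 0 < g i}, Wt α g.1

noncomputable def ZS {r : ℕ} (α : Fin r → ℕ) : ℝ≥0∞ :=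
  ∑' g : {g : Fin r → ℕ // Monotone g ∧ ∀ i, 0 < g i}, Wt α g.1

lemma Wt_ne_top {r : ℕ} (α g : Fin r → ℕ) (hg : ∀ i, 0 < g i) : Wt α g ≠ ∞ := by
  refine ENNReal.prod_ne_top fun i _ => ?_
  exact ENNReal.pow_ne_top (by simp [(hg i).ne'])

lemma Wt_toReal {r : ℕ} (α g : Fin r → ℕ) :
    (Wt α g).toReal = ∏ i, ((g i : ℝ) ^ (α i))⁻¹ := by
  rw [Wt, ENNReal.toReal_prod]
  exact Finset.prod_congr rfl fun i _ => by
    rw [ENNReal.toReal_pow, ENNReal.toReal_inv, ENNReal.toReal_natCast, inv_pow]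

lemma mzs_eq_ZS {r : ℕ} (α : Fin r → ℕ) : mzs α = (ZS α).toReal := by
  rw [ZS, ENNReal.tsum_toReal_eq (f := fun g : {g : Fin r → ℕ // Monotone g ∧ ∀ i, 0 < g i} =>
    Wt α g.1) (fun g => Wt_ne_top α g.1 g.2.2), mzs]
  exact tsum_congr fun g => (Wt_toReal α g.1).symm

lemma mzv_eq_ZV {r : ℕ} (α : Fin r → ℕ) : mzv α = (ZV α).toReal := by
  rw [ZV, ENNReal.tsum_toReal_eq (f := fun g : {g : Fin r → ℕ // StrictMono g ∧ ∀ i, 0 < g i} =>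
    Wt α g.1) (fun g => Wt_ne_top α g.1 g.2.2), mzv]
  exact tsum_congr fun g => (Wt_toReal α g.1).symm


lemma ofFn_pos_sum {m r : ℕ} (α : Fin r → ℕ) (hpos : ∀ i, 0 < α i) (hsum : ∑ i, α i = m) :
    (∀ {x : ℕ}, x ∈ List.ofFn α → 0 < x) ∧ (List.ofFn α).sum = m := by
  constructor
  · intro x hx
    obtain ⟨i, rfl⟩ := Set.mem_range.1 (List.mem_ofFn.1 hx)
    exact hpos i
  · rw [List.sum_ofFn]; exact hsum

lemma mk_len_blocksFun {m r : ℕ} (α : Fin r → ℕ) (h1 : _) (h2 : _) :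
    (⟨(Composition.mk (List.ofFn α) h1 h2 : Composition m).length,
      (Composition.mk (List.ofFn α) h1 h2 : Composition m).blocksFun⟩ : Σ r : ℕ, Fin r → ℕ)
      = ⟨r, α⟩ := by
  refine Sigma.ext (by simp [Composition.length]) ?_
  refine (Fin.heq_fun_iff (by simp [Composition.length])).2 ?_
  intro i
  simp [Composition.blocksFun, List.get_ofFn]

lemma sum_compositions {M : Type*} [AddCommMonoid M] (m : ℕ) (hm : 0 < m)
    (F : (Σ r : ℕ, (Fin r → ℕ)) → M) :
    ∑ r ∈ Finset.Icc 1 m, ∑ α ∈ (Finset.Nat.antidiagonalTuple r m).filter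
        (fun α => ∀ i, 0 < α i), F ⟨r, α⟩
      = ∑ c : Composition m, F ⟨c.length, c.blocksFun⟩ := by
  classical
  rw [show (∑ r ∈ Finset.Icc 1 m, ∑ α ∈ (Finset.Nat.antidiagonalTuple r m).filter
      (fun α => ∀ i, 0 < α i), F ⟨r, α⟩)
    = ∑ x ∈ (Finset.Icc 1 m).sigma (fun r => (Finset.Nat.antidiagonalTuple r m).filter
      (fun α => ∀ i, 0 < α i)), F x from (Finset.sum_sigma _ _ _).symm]
  refine Finset.sum_nbij' (i := fun a => if h : (∀ i, 0 < a.2 i) ∧ (∑ i, a.2 i = m) then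
      Composition.mk (List.ofFn a.2) (ofFn_pos_sum a.2 h.1 h.2).1 (ofFn_pos_sum a.2 h.1 h.2).2
      else Composition.ones m)
    (j := fun c => ⟨c.length, c.blocksFun⟩) ?_ ?_ ?_ ?_ ?_
  · intro a _; exact Finset.mem_univ _
  · intro c _
    refine Finset.mem_sigma.2 ⟨Finset.mem_Icc.2 ⟨c.length_pos_of_pos hm, c.length_le⟩, ?_⟩
    exact Finset.mem_filter.2 ⟨Finset.Nat.mem_antidiagonalTuple.2 c.sum_blocksFun,
      fun i => c.one_le_blocksFun i⟩
  · rintro ⟨r, α⟩ ha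
    obtain ⟨h1, h2⟩ := Finset.mem_sigma.1 ha
    obtain ⟨hsum, hpos⟩ := Finset.mem_filter.1 h2
    dsimp only
    rw [dif_pos ⟨hpos, Finset.Nat.mem_antidiagonalTuple.1 hsum⟩]
    exact mk_len_blocksFun α _ _
  · intro c _
    have h : (∀ i, 0 < c.blocksFun i) ∧ (∑ i, c.blocksFun i = m) :=
      ⟨fun i => c.one_le_blocksFun i, c.sum_blocksFun⟩
    dsimp only
    rw [dif_pos h]
    exact Composition.ext (by simp [Composition.ofFn_blocksFun])
  · rintro ⟨r, α⟩ ha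
    obtain ⟨h1, h2⟩ := Finset.mem_sigma.1 ha
    obtain ⟨hsum, hpos⟩ := Finset.mem_filter.1 h2
    dsimp only
    rw [dif_pos ⟨hpos, Finset.Nat.mem_antidiagonalTuple.1 hsum⟩]
    exact (congrArg F (mk_len_blocksFun α _ _)).symm


namespace Stmt17

lemma index_mono {n : ℕ} (c : Composition n) : Monotone c.index := by
  intro j j' h
  by_contra hc
  push_neg at hc
  have h1 : (j' : ℕ) < c.sizeUpTo ((c.index j' : ℕ) + 1) := c.lt_sizeUpTo_index_succ j'
  have h2 : c.sizeUpTo ((c.index j' : ℕ) + 1) ≤ c.sizeUpTo (c.index j) :=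
    c.monotone_sizeUpTo (Nat.succ_le_of_lt hc)
  have h3 : c.sizeUpTo (c.index j) ≤ j := c.sizeUpTo_index_le j
  omega

lemma card_index_fiber {n : ℕ} (c : Composition n) (i : Fin c.length) :
    (Finset.univ.filter fun j => c.index j = i).card = c.blocksFun i := by
  classical
  rw [← Fintype.card_fin (c.blocksFun i)]
  refine (Finset.card_bij (fun (a : Fin (c.blocksFun i)) _ => c.embedding i a) ?_ ?_ ?_).symm
  · intro a _
    exact Finset.mem_filter.2 ⟨Finset.mem_univ _, c.index_embedding i a⟩
  · intro a _ b _ h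
    exact (c.embedding i).injective h
  · intro j hj
    obtain ⟨_, hj⟩ := Finset.mem_filter.1 hj
    obtain ⟨a, ha⟩ := Set.mem_range.1 (hj ▸ c.mem_range_embedding j)
    exact ⟨a, Finset.mem_univ _, ha⟩

lemma index_last {n : ℕ} (c : Composition n) (j : Fin n) (hj : (j : ℕ) = n - 1) :
    (c.index j : ℕ) = c.length - 1 := by
  have hn : 0 < n := lt_of_le_of_lt (Nat.zero_le _) j.2
  have hL : 0 < c.length := c.length_pos_of_pos hn
  have h1 : (j : ℕ) < c.sizeUpTo ((c.index j : ℕ) + 1) := c.lt_sizeUpTo_index_succ j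
  have h2 : (c.index j : ℕ) < c.length := (c.index j).2
  by_contra hne
  have hlt : (c.index j : ℕ) + 1 ≤ c.length - 1 := by omega
  have h3 : c.sizeUpTo ((c.index j : ℕ) + 1) ≤ c.sizeUpTo (c.length - 1) :=
    c.monotone_sizeUpTo hlt
  have h4 : c.sizeUpTo (c.length - 1) + c.blocksFun ⟨c.length - 1, by omega⟩ = n := by
    have := c.sizeUpTo_succ' ⟨c.length - 1, by omega⟩
    simp only at this
    rw [show (c.length - 1) + 1 = c.length by omega] at this
    rw [← this, c.sizeUpTo_length]
  have h5 : 1 ≤ c.blocksFun ⟨c.length - 1, by omega⟩ := c.one_le_blocksFun _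
  omega

end Stmt17

namespace Stmt17

lemma fin_filter_lt_card {m : ℕ} (j : Fin m) :
    (Finset.univ.filter fun j' => j' < j).card = (j : ℕ) := by
  classical
  rw [show (Finset.univ.filter fun j' => j' < j) = Finset.Iio j by
    ext x; simp]
  exact Fin.card_Iio j

lemma fin_filter_le_card {m : ℕ} (j : Fin m) :
    (Finset.univ.filter fun j' => j' ≤ j).card = (j : ℕ) + 1 := by
  classical
  rw [show (Finset.univ.filter fun j' => j' ≤ j) = Finset.Iic j by
    ext x; simp]
  exact Fin.card_Iic j

/-- The monotone-tuple index type. -/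
def MT (m : ℕ) := {f : Fin m → ℕ // Monotone f ∧ ∀ i, 0 < f i}
/-- The strict-tuple index type. -/
def ST (r : ℕ) := {g : Fin r → ℕ // StrictMono g ∧ ∀ i, 0 < g i}

/-- blow a strict tuple up along a composition -/
def phi (m : ℕ) (x : Σ c : Composition m, ST c.length) : MT m :=
  ⟨x.2.1 ∘ x.1.index, (x.2.2.1.monotone).comp (index_mono x.1),
    fun i => x.2.2.2 _⟩

lemma card_fiber_eq {m : ℕ} (c : Composition m) (g : Fin c.length → ℕ)
    (hg : Function.Injective g) (i : Fin c.length) :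
    (Finset.univ.filter fun j => (g ∘ c.index) j = g i).card = c.blocksFun i := by
  classical
  rw [← card_index_fiber c i]
  congr 1
  ext j
  simp only [Finset.mem_filter, Function.comp_apply]
  exact and_congr_right fun _ => ⟨fun h => hg h, fun h => by rw [h]⟩

lemma image_phi {m : ℕ} (c : Composition m) (g : Fin c.length → ℕ) :
    Finset.image (g ∘ c.index) Finset.univ = Finset.image g Finset.univ := by
  classical
  apply Finset.Subset.antisymm
  · intro x hx
    obtain ⟨j, _, rfl⟩ := Finset.mem_image.1 hx
    exact Finset.mem_image_of_mem g (Finset.mem_univ _)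
  · intro x hx
    obtain ⟨i, _, rfl⟩ := Finset.mem_image.1 hx
    refine Finset.mem_image.2 ⟨c.embedding i ⟨0, c.one_le_blocksFun i⟩, Finset.mem_univ _, ?_⟩
    simp [Function.comp_apply, c.index_embedding]

lemma phi_injective (m : ℕ) : Function.Injective (phi m) := by
  rintro ⟨c, g, hgs, hgp⟩ ⟨c', g', hgs', hgp'⟩ h
  have hf : g ∘ c.index = g' ∘ c'.index := congrArg Subtype.val h
  set T := Finset.image (g ∘ c.index) Finset.univ with hTdef
  have hT : T.card = c.length := by
    rw [hTdef, image_phi, Finset.card_image_of_injective _ hgs.injective,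
      Finset.card_univ, Fintype.card_fin]
  have hT' : T.card = c'.length := by
    rw [hTdef, hf, image_phi, Finset.card_image_of_injective _ hgs'.injective,
      Finset.card_univ, Fintype.card_fin]
  have hL : c.length = c'.length := hT ▸ hT'
  have hgmem : ∀ x, g x ∈ T := fun x => by
    rw [hTdef, image_phi]; exact Finset.mem_image_of_mem g (Finset.mem_univ _)
  have hgmem' : ∀ x, (g' ∘ Fin.cast hL) x ∈ T := fun x => by
    rw [hTdef, hf, image_phi]; exact Finset.mem_image_of_mem g' (Finset.mem_univ _)
  have hgu : g = T.orderEmbOfFin hT := Finset.orderEmbOfFin_unique hT hgmem hgs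
  have hgu' : g' ∘ Fin.cast hL = T.orderEmbOfFin hT :=
    Finset.orderEmbOfFin_unique hT hgmem' (hgs'.comp (Fin.castOrderIso hL).strictMono)
  have hgg : g = g' ∘ Fin.cast hL := by rw [hgu, hgu']
  have hblocks : c.blocks = c'.blocks := by
    refine List.ext_getElem hL ?_
    intro i h1 h2
    have e1 : c.blocks[i] = c.blocksFun ⟨i, h1⟩ := rfl
    have e2 : c'.blocks[i] = c'.blocksFun ⟨i, h2⟩ := rfl
    rw [e1, e2, ← card_fiber_eq c g hgs.injective ⟨i, h1⟩,
      ← card_fiber_eq c' g' hgs'.injective ⟨i, h2⟩]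
    congr 1
    ext j
    have : g ⟨i, h1⟩ = g' ⟨i, h2⟩ := by rw [hgg]; rfl
    simp only [Finset.mem_filter, hf, this]
  have hcc : c = c' := Composition.ext hblocks
  subst hcc
  have hgg' : g = g' := by
    funext i
    rw [hgg]
    rfl
  subst hgg'
  rfl
end Stmt17

namespace Stmt17

lemma phi_surjective (m : ℕ) : Function.Surjective (phi m) := by
  classical
  rintro ⟨f, hfm, hfp⟩
  set T := Finset.image f Finset.univ with hTdef
  set r := T.card with hrdef
  set e : Fin r ≃o {x // x ∈ T} := T.orderIsoOfFin rfl with hedef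
  have hmemT : ∀ j, f j ∈ T := fun j => Finset.mem_image_of_mem f (Finset.mem_univ _)
  set σ : Fin m → Fin r := fun j => e.symm ⟨f j, hmemT j⟩ with hσdef
  have hσmono : Monotone σ := fun j j' hj =>
    e.symm.monotone (Subtype.mk_le_mk.2 (hfm hj))
  have heσ : ∀ j, (↑(e (σ j)) : ℕ) = f j := fun j => by
    rw [hσdef]; simp
  have hσsurj : Function.Surjective σ := by
    intro i
    obtain ⟨j, _, hj⟩ := Finset.mem_image.1 (e i).2
    refine ⟨j, ?_⟩
    have hx : (⟨f j, hmemT j⟩ : {x // x ∈ T}) = e i := Subtype.ext hj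
    rw [hσdef]
    simp only
    rw [hx]
    exact e.symm_apply_apply i
  set α : Fin r → ℕ := fun i => (Finset.univ.filter fun j => σ j = i).card with hαdef
  have hαpos : ∀ i, 0 < α i := by
    intro i
    obtain ⟨j, hj⟩ := hσsurj i
    exact Finset.card_pos.2 ⟨j, Finset.mem_filter.2 ⟨Finset.mem_univ _, hj⟩⟩
  have hαsum : (List.ofFn α).sum = m := by
    rw [List.sum_ofFn, hαdef]
    have := Finset.card_eq_sum_card_fiberwise
      (f := σ) (s := Finset.univ) (t := Finset.univ) (fun x _ => Finset.mem_univ _)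
    simpa using this.symm
  set c : Composition m := ⟨List.ofFn α, fun hx => by
      obtain ⟨i, rfl⟩ := Set.mem_range.1 (List.mem_ofFn.1 hx); exact hαpos i,
    hαsum⟩ with hcdef
  have hlen : c.length = r := by simp [hcdef, Composition.length]
  have hstep : ∀ i : ℕ, i ≤ r →
      c.sizeUpTo i = (Finset.univ.filter fun j => (σ j : ℕ) < i).card := by
    intro i
    induction i with
    | zero => intro _; simp
    | succ i ih =>
      intro hi
      have hi' : i < r := hi
      have hii : i < c.length := by rw [hlen]; exact hi'
      rw [c.sizeUpTo_succ hii, ih (le_of_lt hi')]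
      have hblock : c.blocks[i] = α ⟨i, hi'⟩ := by
        simp [hcdef, List.getElem_ofFn]
      rw [hblock, hαdef]
      have hsplit : (Finset.univ.filter fun j => (σ j : ℕ) < i + 1)
          = (Finset.univ.filter fun j => (σ j : ℕ) < i)
            ∪ (Finset.univ.filter fun j => σ j = ⟨i, hi'⟩) := by
        ext j
        simp only [Finset.mem_filter, Finset.mem_union, Finset.mem_univ, true_and]
        constructor
        · intro h
          rcases Nat.lt_succ_iff_lt_or_eq.1 h with h | h
          · exact Or.inl h
          · exact Or.inr (Fin.ext h)
        · rintro (h | h)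
          · omega
          · simp [h]
      have hdisj : Disjoint (Finset.univ.filter fun j => (σ j : ℕ) < i)
          (Finset.univ.filter fun j => σ j = ⟨i, hi'⟩) := by
        refine Finset.disjoint_left.2 ?_
        intro j hj1 hj2
        obtain ⟨-, h1⟩ := Finset.mem_filter.1 hj1
        obtain ⟨-, h2⟩ := Finset.mem_filter.1 hj2
        rw [h2] at h1
        simp at h1
      rw [hsplit, Finset.card_union_of_disjoint hdisj]
  have hidx : ∀ j, (c.index j : ℕ) = (σ j : ℕ) := by
    intro j
    have hA : c.sizeUpTo (σ j) ≤ (j : ℕ) := by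
      rw [hstep (σ j) (le_of_lt (σ j).2)]
      calc (Finset.univ.filter fun j' => (σ j' : ℕ) < (σ j : ℕ)).card
          ≤ (Finset.univ.filter fun j' => j' < j).card := by
            refine Finset.card_le_card ?_
            intro j' hj'
            obtain ⟨_, h⟩ := Finset.mem_filter.1 hj'
            refine Finset.mem_filter.2 ⟨Finset.mem_univ _, ?_⟩
            by_contra hc
            push_neg at hc
            exact absurd (hσmono hc) (by simpa using h)
        _ = (j : ℕ) := fin_filter_lt_card j
    have hB : (j : ℕ) < c.sizeUpTo ((σ j : ℕ) + 1) := by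
      rw [hstep ((σ j : ℕ) + 1) (σ j).2]
      have hsub : (Finset.univ.filter fun j' => j' ≤ j)
          ⊆ (Finset.univ.filter fun j' => (σ j' : ℕ) < (σ j : ℕ) + 1) := by
        intro j' hj'
        obtain ⟨_, h⟩ := Finset.mem_filter.1 hj'
        refine Finset.mem_filter.2 ⟨Finset.mem_univ _, ?_⟩
        have := hσmono h
        omega
      have := Finset.card_le_card hsub
      rw [fin_filter_le_card j] at this
      omega
    have h1 := c.sizeUpTo_index_le j
    have h2 : (j : ℕ) < c.sizeUpTo ((c.index j : ℕ) + 1) := by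
      simpa using c.lt_sizeUpTo_index_succ j
    rcases lt_trichotomy ((c.index j : ℕ)) ((σ j : ℕ)) with hlt | he | hgt
    · have h3 : c.sizeUpTo ((c.index j : ℕ) + 1) ≤ c.sizeUpTo ((σ j : ℕ)) :=
        c.monotone_sizeUpTo hlt
      omega
    · exact he
    · have h3 : c.sizeUpTo ((σ j : ℕ) + 1) ≤ c.sizeUpTo ((c.index j : ℕ)) :=
        c.monotone_sizeUpTo hgt
      omega
  refine ⟨⟨c, ⟨fun i => (↑(e (Fin.cast hlen i)) : ℕ), ?_, ?_⟩⟩, ?_⟩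
  · intro i i' hii
    exact Subtype.coe_lt_coe.2 (e.strictMono ((Fin.castOrderIso hlen).strictMono hii))
  · intro i
    show 0 < (↑(e (Fin.cast hlen i)) : ℕ)
    obtain ⟨j, _, hj⟩ := Finset.mem_image.1 (e (Fin.cast hlen i)).2
    rw [← hj]
    exact hfp j
  · refine Subtype.ext ?_
    funext j
    show (↑(e (Fin.cast hlen (c.index j))) : ℕ) = f j
    rw [show Fin.cast hlen (c.index j) = σ j from Fin.ext (by simpa using hidx j)]
    exact heσ j

end Stmt17

namespace Stmt17

lemma card_emb_last {q : ℕ} (c : Composition (q + 1)) (i : Fin c.length) :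
    (Finset.univ.filter fun a => c.embedding i a = Fin.last q).card
      = if (i : ℕ) = c.length - 1 then 1 else 0 := by
  classical
  have hlast : (c.index (Fin.last q) : ℕ) = c.length - 1 :=
    index_last c (Fin.last q) (by simp)
  split_ifs with hi
  · have hii : c.index (Fin.last q) = i := Fin.ext (by omega)
    obtain ⟨a, ha⟩ := Set.mem_range.1 (c.mem_range_embedding_iff'.2 hii.symm)
    rw [Finset.card_eq_one]
    refine ⟨a, ?_⟩
    ext b
    simp only [Finset.mem_filter, Finset.mem_univ, true_and, Finset.mem_singleton]
    constructor
    · intro hb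
      exact (c.embedding i).injective (by rw [hb, ha])
    · rintro rfl; exact ha
  · rw [Finset.card_eq_zero]
    refine Finset.filter_eq_empty_iff.2 ?_
    intro a _ hc
    have h2 : c.index (c.embedding i a) = i := c.index_embedding i a
    rw [hc] at h2
    rw [← h2] at hi
    omega

lemma weight_eq {q : ℕ} (n : ℕ) (c : Composition (q + 1)) (g : Fin c.length → ℕ) :
    Wt (Fin.snoc (fun _ => 1) (n + 2) : Fin (q + 1) → ℕ) (g ∘ c.index)
      = Wt (fun i => c.blocksFun i + if (i : ℕ) = c.length - 1 then n + 1 else 0) g := by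
  classical
  set β : Fin (q + 1) → ℕ := Fin.snoc (fun _ => 1) (n + 2) with hβ
  have hβval : ∀ j : Fin (q + 1), β j = 1 + if (j : ℕ) = q then n + 1 else 0 := by
    intro j
    induction j using Fin.lastCases with
    | last => simp [hβ]; omega
    | cast k => simp [hβ, (Nat.ne_of_lt k.isLt)]
  have key : ∀ i : Fin c.length,
      ∑ a : Fin (c.blocksFun i), β (c.embedding i a)
        = c.blocksFun i + if (i : ℕ) = c.length - 1 then n + 1 else 0 := by
    intro i
    have hpt : ∀ a : Fin (c.blocksFun i), β (c.embedding i a)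
        = 1 + if c.embedding i a = Fin.last q then n + 1 else 0 := by
      intro a
      rw [hβval]
      congr 1
      congr 1
      rw [show ((c.embedding i a : ℕ) = q) = (c.embedding i a = Fin.last q) from
        propext (by rw [Fin.ext_iff]; simp)]
    simp_rw [hpt]
    rw [Finset.sum_add_distrib, Finset.sum_const, ← Finset.sum_filter, Finset.sum_const,
      card_emb_last]
    simp only [Finset.card_univ, Fintype.card_fin, smul_eq_mul, mul_one]
    split_ifs <;> simp
  unfold Wt
  have step1 : (∏ j : Fin (q + 1), (((g ∘ c.index) j : ℝ≥0∞)⁻¹) ^ β j)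
      = ∏ x : (Σ i : Fin c.length, Fin (c.blocksFun i)),
          ((g x.1 : ℝ≥0∞)⁻¹) ^ β (c.blocksFinEquiv x) := by
    refine (Fintype.prod_equiv c.blocksFinEquiv _ _ ?_).symm
    rintro ⟨i, a⟩
    simp only [Function.comp_apply]
    congr 2
    show (↑(g i) : ℝ≥0∞) = ↑(g (c.index (c.embedding i a)))
    rw [c.index_embedding]
  rw [step1, ← Finset.univ_sigma_univ, Finset.prod_sigma]
  refine Finset.prod_congr rfl fun i _ => ?_
  rw [show (∏ a : Fin (c.blocksFun i), ((g i : ℝ≥0∞)⁻¹) ^ β (c.blocksFinEquiv ⟨i, a⟩))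
      = ((g i : ℝ≥0∞)⁻¹) ^ (∑ a : Fin (c.blocksFun i), β (c.blocksFinEquiv ⟨i, a⟩)) from
    Finset.prod_pow_eq_pow_sum _ _ _]
  show _ = ((g i : ℝ≥0∞)⁻¹) ^ (c.blocksFun i + if (i : ℕ) = c.length - 1 then n + 1 else 0)
  rw [← key i]
  rfl

end Stmt17

namespace Stmt17

lemma key_identity (q n : ℕ) :
    ZS (Fin.snoc (fun _ => 1) (n + 2) : Fin (q + 1) → ℕ)
      = ∑ r ∈ Finset.Icc 1 (q + 1),
          ∑ α ∈ (Finset.Nat.antidiagonalTuple r (q + 1)).filter (fun α => ∀ i, 0 < α i),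
            ZV (fun i : Fin r => α i + if (i : ℕ) = r - 1 then n + 1 else 0) := by
  classical
  rw [sum_compositions (q + 1) (Nat.succ_pos q)
    (F := fun x => ZV (fun i : Fin x.1 => x.2 i + if (i : ℕ) = x.1 - 1 then n + 1 else 0))]
  rw [← tsum_fintype (L := SummationFilter.unconditional _)]
  have h2 := ENNReal.tsum_sigma' (β := fun c : Composition (q + 1) => ST c.length)
      (fun x => Wt (fun i : Fin x.1.length =>
        x.1.blocksFun i + if (i : ℕ) = x.1.length - 1 then n + 1 else 0) x.2.1)
  rw [show (∑' c : Composition (q + 1),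
      ZV (fun i : Fin c.length => c.blocksFun i + if (i : ℕ) = c.length - 1 then n + 1 else 0))
    = ∑' c : Composition (q + 1), ∑' g : ST c.length,
        Wt (fun i : Fin c.length =>
          c.blocksFun i + if (i : ℕ) = c.length - 1 then n + 1 else 0) g.1 from rfl]
  rw [← h2]
  have hbij : Function.Bijective (phi (q + 1)) := ⟨phi_injective _, phi_surjective _⟩
  let E : (Σ c : Composition (q + 1), ST c.length) ≃ MT (q + 1) :=
    Equiv.ofBijective (phi (q + 1)) hbij
  rw [ZS]
  have h3 : (∑' f : MT (q + 1), Wt (Fin.snoc (fun _ => 1) (n + 2) : Fin (q + 1) → ℕ) f.1)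
      = ∑' x : (Σ c : Composition (q + 1), ST c.length),
          Wt (Fin.snoc (fun _ => 1) (n + 2) : Fin (q + 1) → ℕ) ((phi (q + 1) x)).1 :=
    (Equiv.tsum_eq E (fun f : MT (q + 1) =>
      Wt (Fin.snoc (fun _ => 1) (n + 2) : Fin (q + 1) → ℕ) f.1)).symm
  exact h3.trans (tsum_congr fun x => weight_eq n x.1 x.2.1)

end Stmt17

namespace Stmt17

lemma tsum_pi_pow (v : ℕ → ℝ≥0∞) : ∀ k : ℕ,
    ∑' t : Fin k → ℕ, ∏ i, v (t i) = (∑' j : ℕ, v j) ^ k := by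
  intro k
  induction k with
  | zero =>
    rw [pow_zero]
    rw [tsum_eq_single (fun _ => 0) (fun b hb => absurd (Subsingleton.elim b _) hb)]
    simp
  | succ k ih =>
    rw [Equiv.tsum_eq ((Fin.consEquiv (fun _ : Fin (k+1) => ℕ))) (fun t : Fin (k+1) → ℕ => ∏ i, v (t i))
      |>.symm]
    have hpt : ∀ p : ℕ × (Fin k → ℕ),
        (∏ i, v ((((Fin.consEquiv (fun _ : Fin (k+1) => ℕ))) p) i)) = v p.1 * ∏ i, v (p.2 i) := by
      intro p
      rw [show (((Fin.consEquiv (fun _ : Fin (k+1) => ℕ))) p) = Fin.cons p.1 p.2 from rfl]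
      rw [Fin.prod_univ_succ]
      simp
    rw [tsum_congr hpt, ENNReal.tsum_prod']
    have : ∀ a : ℕ, ∑' b : Fin k → ℕ, v a * ∏ i, v (b i) = v a * (∑' j : ℕ, v j) ^ k := by
      intro a
      rw [ENNReal.tsum_mul_left, ih]
    rw [tsum_congr this, ENNReal.tsum_mul_right, pow_succ, mul_comm]

open Filter Asymptotics in
lemma summable_log_pow_div (Q N : ℕ) :
    Summable (fun m : ℕ => (1 + Real.log m) ^ Q * ((m : ℝ) ^ (N + 2))⁻¹) := by
  have hr : (0:ℝ) < ((2 * Q + 2 : ℕ) : ℝ)⁻¹ := by positivity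
  set r : ℝ := ((2 * Q + 2 : ℕ) : ℝ)⁻¹ with hrdef
  have h1 : (fun x : ℝ => 1 + Real.log x) =O[atTop] fun x => x ^ r := by
    refine IsBigO.add ?_ (isLittleO_log_rpow_atTop hr).isBigO
    refine isBigO_iff.2 ⟨1, ?_⟩
    filter_upwards [eventually_ge_atTop (1:ℝ)] with x hx
    have hx0 : (0:ℝ) ≤ x := by linarith
    rw [one_mul, norm_one, Real.norm_eq_abs, abs_of_nonneg (Real.rpow_nonneg hx0 _)]
    exact Real.one_le_rpow hx hr.le
  have h2 := h1.pow Q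
  have h3 : (fun x : ℝ => (x ^ r) ^ Q) =O[atTop] fun x => x ^ ((1:ℝ)/2) := by
    refine isBigO_iff.2 ⟨1, ?_⟩
    filter_upwards [eventually_ge_atTop (1:ℝ)] with x hx
    have hx0 : (0:ℝ) ≤ x := by linarith
    rw [one_mul, ← Real.rpow_natCast (x ^ r) Q, ← Real.rpow_mul hx0,
      Real.norm_eq_abs, Real.norm_eq_abs, abs_of_nonneg (Real.rpow_nonneg hx0 _),
      abs_of_nonneg (Real.rpow_nonneg hx0 _)]
    refine Real.rpow_le_rpow_of_exponent_le hx ?_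
    rw [hrdef]
    rw [inv_mul_eq_div, div_le_div_iff₀ (by positivity) (by norm_num)]
    push_cast
    nlinarith [Nat.cast_nonneg (α := ℝ) Q]
  have h4 : (fun x : ℝ => ((x : ℝ) ^ (N + 2))⁻¹) =O[atTop] fun x => x ^ (-(2:ℝ)) := by
    refine isBigO_iff.2 ⟨1, ?_⟩
    filter_upwards [eventually_ge_atTop (1:ℝ)] with x hx
    have hx0 : (0:ℝ) < x := by linarith
    have hle : (x ^ (N + 2))⁻¹ ≤ x ^ (-(2:ℝ)) := by
      rw [Real.rpow_neg hx0.le, show ((2:ℝ) = ((2:ℕ):ℝ)) by norm_num,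
        Real.rpow_natCast]
      exact inv_anti₀ (by positivity) (pow_le_pow_right₀ hx (by omega))
    rw [one_mul, Real.norm_eq_abs, Real.norm_eq_abs,
      abs_of_nonneg (by positivity), abs_of_nonneg (Real.rpow_nonneg hx0.le _)]
    exact hle
  have h5 := (h2.trans h3).mul h4
  have h6 : (fun x : ℝ => x ^ ((1:ℝ)/2) * x ^ (-(2:ℝ))) =ᶠ[atTop]
      fun x : ℝ => x ^ (-(3/2 : ℝ)) := by
    filter_upwards [eventually_gt_atTop (0:ℝ)] with x hx
    rw [← Real.rpow_add hx]
    norm_num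
  have h7 := (h5.trans h6.isBigO)
  have h8 := h7.comp_tendsto tendsto_natCast_atTop_atTop
  exact summable_of_isBigO_nat (Real.summable_nat_rpow.2 (by norm_num)) h8

end Stmt17

namespace Stmt17
open Filter in
lemma ZS_ne_top (q n : ℕ) :
    ZS (Fin.snoc (fun _ => 1) (n + 2) : Fin (q + 1) → ℕ) ≠ ∞ := by
  classical
  set β : Fin (q + 1) → ℕ := Fin.snoc (fun _ => 1) (n + 2) with hβ
  set v : ℕ → ℕ → ℝ≥0∞ := fun m k => if k ∈ Finset.Icc 1 m then ((k : ℝ≥0∞))⁻¹ else 0 with hv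
  set u : (Σ _ : ℕ, (Fin q → ℕ)) → ℝ≥0∞ := fun x =>
    if 1 ≤ x.1 then ((x.1 : ℝ≥0∞)⁻¹) ^ (n + 2) * ∏ i, v x.1 (x.2 i) else 0 with hu
  set ι : MT (q + 1) → (Σ _ : ℕ, (Fin q → ℕ)) :=
    fun f => ⟨f.1 (Fin.last q), fun i => f.1 i.castSucc⟩ with hι
  have hιinj : Function.Injective ι := by
    rintro ⟨f, hf⟩ ⟨f', hf'⟩ h
    rw [hι] at h
    simp only [Sigma.mk.inj_iff] at h
    obtain ⟨h1, h2⟩ := h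
    have h2' : (fun i : Fin q => f i.castSucc) = fun i => f' i.castSucc := eq_of_heq h2
    refine Subtype.ext ?_
    funext j
    induction j using Fin.lastCases with
    | last => exact h1
    | cast k => exact congrFun h2' k
  have hpt : ∀ f : MT (q + 1), Wt β f.1 = u (ι f) := by
    rintro ⟨f, hfm, hfp⟩
    have hlast : 1 ≤ f (Fin.last q) := hfp _
    rw [Wt, Fin.prod_univ_castSucc]
    have hislast : β (Fin.last q) = n + 2 := by simp [hβ]
    have hcast : ∀ i : Fin q, β i.castSucc = 1 := fun i => by simp [hβ]
    simp_rw [hcast, pow_one, hislast]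
    rw [hu]
    simp only
    rw [if_pos hlast, mul_comm]
    congr 1
    refine Finset.prod_congr rfl fun i _ => ?_
    rw [hv]
    simp only
    rw [if_pos (Finset.mem_Icc.2 ⟨hfp _, hfm (Fin.le_last _)⟩)]
  have hb : ZS β ≤ ∑' x : (Σ _ : ℕ, Fin q → ℕ), u x := by
    rw [ZS]
    calc (∑' f : {g : Fin (q + 1) → ℕ // Monotone g ∧ ∀ i, 0 < g i}, Wt β f.1)
        = ∑' f : MT (q + 1), u (ι f) := tsum_congr hpt
      _ ≤ _ := ENNReal.tsum_comp_le_tsum_of_injective hιinj u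
  set S : ℕ → ℝ≥0 := fun m => ∑ k ∈ Finset.Icc 1 m, ((k : ℝ≥0))⁻¹ with hS
  set b : ℕ → ℝ≥0 := fun m =>
    if 1 ≤ m then ((m : ℝ≥0)⁻¹) ^ (n + 2) * (S m) ^ q else 0 with hbdef
  have hinner : ∀ m : ℕ, (∑' t : Fin q → ℕ, u ⟨m, t⟩) = (b m : ℝ≥0∞) := by
    intro m
    by_cases hm : 1 ≤ m
    · rw [hu]
      simp only [if_pos hm]
      rw [ENNReal.tsum_mul_left, tsum_pi_pow (v m) q]
      have hsum : ∑' k : ℕ, v m k = (S m : ℝ≥0∞) := by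
        rw [tsum_eq_sum (s := Finset.Icc 1 m) (f := v m)
          (fun k hk => by rw [hv]; simp only [if_neg hk])]
        rw [hS, ENNReal.coe_finset_sum]
        refine Finset.sum_congr rfl fun k hk => ?_
        rw [hv]
        simp only [if_pos hk]
        have hk0 : (k : ℝ≥0) ≠ 0 := by
          have := (Finset.mem_Icc.1 hk).1
          simp only [ne_eq, Nat.cast_eq_zero]
          omega
        rw [ENNReal.coe_inv hk0, ENNReal.coe_natCast]
      rw [hsum, hbdef]
      simp only [if_pos hm]
      have hm0 : (m : ℝ≥0) ≠ 0 := by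
        simp only [ne_eq, Nat.cast_eq_zero]; omega
      rw [ENNReal.coe_mul, ENNReal.coe_pow, ENNReal.coe_pow, ENNReal.coe_inv hm0,
        ENNReal.coe_natCast]
    · rw [hbdef]
      simp only [if_neg hm]
      have : ∀ t : Fin q → ℕ, u ⟨m, t⟩ = 0 := fun t => by
        rw [hu]; simp only [if_neg hm]
      rw [tsum_congr this, tsum_zero]
      simp
  have hcoe : ∀ m : ℕ, ((b m : ℝ≥0) : ℝ) ≤ (1 + Real.log m) ^ q * ((m : ℝ) ^ (n + 2))⁻¹ := by
    intro m
    by_cases hm : 1 ≤ m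
    · have hm1 : (1 : ℝ) ≤ (m : ℝ) := by exact_mod_cast hm
      have hSm : ((S m : ℝ≥0) : ℝ) = (harmonic m : ℝ) := by
        rw [hS, harmonic_eq_sum_Icc]
        push_cast
        rfl
      have hHle : ((S m : ℝ≥0) : ℝ) ≤ 1 + Real.log m := by
        rw [hSm]; exact harmonic_le_one_add_log m
      rw [hbdef]
      simp only [if_pos hm]
      push_cast
      rw [inv_pow]
      rw [mul_comm]
      refine mul_le_mul ?_ le_rfl (by positivity) (by positivity)
      exact pow_le_pow_left₀ (by positivity) hHle q
    · rw [hbdef]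
      simp only [if_neg hm]
      have hm0 : m = 0 := by omega
      subst hm0
      simp
  have hsummb : Summable b := by
    rw [← NNReal.summable_coe]
    refine Summable.of_nonneg_of_le (fun m => (b m).coe_nonneg) hcoe
      (summable_log_pow_div q n)
  have hne : (∑' x : (Σ _ : ℕ, Fin q → ℕ), u x) ≠ ∞ := by
    rw [ENNReal.tsum_sigma' u, tsum_congr hinner]
    exact ENNReal.tsum_coe_ne_top_iff_summable.2 hsummb
  exact ne_top_of_le_ne_top hne hb
end Stmt17

theorem stmt17 (q n : ℕ) :
    mzs (Fin.snoc (ones q) (n + 2)) =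
      ∑ r ∈ Finset.Icc 1 (q + 1),
        ∑ α ∈ (Finset.Nat.antidiagonalTuple r (q + 1)).filter
            (fun α => ∀ i, 0 < α i),
          mzv (fun i : Fin r => α i + if (i : ℕ) = r - 1 then n + 1 else 0) := by
  classical
  have hkey := Stmt17.key_identity q n
  have hne := Stmt17.ZS_ne_top q n
  have hne' : (∑ r ∈ Finset.Icc 1 (q + 1),
      ∑ α ∈ (Finset.Nat.antidiagonalTuple r (q + 1)).filter (fun α => ∀ i, 0 < α i),
        ZV (fun i : Fin r => α i + if (i : ℕ) = r - 1 then n + 1 else 0)) ≠ ∞ := by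
    rw [← hkey]; exact hne
  have hpiece : ∀ r ∈ Finset.Icc 1 (q + 1),
      (∑ α ∈ (Finset.Nat.antidiagonalTuple r (q + 1)).filter (fun α => ∀ i, 0 < α i),
        ZV (fun i : Fin r => α i + if (i : ℕ) = r - 1 then n + 1 else 0)) ≠ ∞ := by
    intro r hr
    refine ne_top_of_le_ne_top hne' ?_
    exact Finset.single_le_sum (f := fun r => ∑ α ∈ (Finset.Nat.antidiagonalTuple r
      (q + 1)).filter (fun α => ∀ i, 0 < α i),
      ZV (fun i : Fin r => α i + if (i : ℕ) = r - 1 then n + 1 else 0))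
      (fun _ _ => zero_le) hr
  rw [mzs_eq_ZS, show (Fin.snoc (ones q) (n + 2) : Fin (q + 1) → ℕ)
    = Fin.snoc (fun _ => 1) (n + 2) from rfl, hkey, ENNReal.toReal_sum hpiece]
  refine Finset.sum_congr rfl fun r hr => ?_
  have hpiece2 : ∀ α ∈ (Finset.Nat.antidiagonalTuple r (q + 1)).filter (fun α => ∀ i, 0 < α i),
      ZV (fun i : Fin r => α i + if (i : ℕ) = r - 1 then n + 1 else 0) ≠ ∞ := by
    intro α hα
    refine ne_top_of_le_ne_top (hpiece r hr) ?_
    exact Finset.single_le_sum (f := fun α : Fin r → ℕ =>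
      ZV (fun i : Fin r => α i + if (i : ℕ) = r - 1 then n + 1 else 0))
      (fun _ _ => zero_le) hα
  rw [ENNReal.toReal_sum hpiece2]
  exact Finset.sum_congr rfl fun α hα => (mzv_eq_ZV _).symm
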